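/- Let 𝕋 be a generator set of R such that every element of 𝕋 is self-inverse (T ∘ T is the identity on R for all T ∈ 𝕋) and 𝕋 is pointwise-disjoint (for all P, T ∈ G(𝕋), if P ψ = T ψ for some ψ ∈ R then P = T). Then for every nonempty A ⊆ Fin n, all equivalence classes of ∼_A on R have the same cardinality, equal to |O_A|. -/

import Mathlib

open Finset

/-- Restriction of a computational basis state `ψ : Fin n → Bool` to a subsystem `A`. -/
def restrict {n : ℕ} (ψ : Fin n → Bool) (A : Finset (Fin n)) : {x // x ∈ A} → Bool :=
  fun a => ψ a.1

/-- The quotient set `R/∼_A`: the set of equivalence classes of the relation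
`ψ ∼_A φ ↔ ψ|_A = φ|_A` on `R`. -/
def classes {n : ℕ} (R : Finset (Fin n → Bool)) (A : Finset (Fin n)) :
    Set (Set (Fin n → Bool)) :=
  {C | ∃ ψ ∈ R, C = {φ | φ ∈ R ∧ restrict φ A = restrict ψ A}}

/-- `A₁ ∼_R A₂`: the unordered pairs of quotient sets coincide. -/
def simR {n : ℕ} (R : Finset (Fin n → Bool)) (A₁ A₂ : Finset (Fin n)) : Prop :=
  ({classes R A₁, classes R A₁ᶜ} : Set (Set (Set (Fin n → Bool)))) =
    {classes R A₂, classes R A₂ᶜ}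

/-- `G(𝕋)`: the set of all finite compositions of elements of `T`
(the empty composition being the identity). -/
def Gset {α : Type*} (T : Set (α → α)) : Set (α → α) :=
  {P | ∃ l : List (α → α), (∀ f ∈ l, f ∈ T) ∧ P = l.foldr (· ∘ ·) id}

/-- `𝕋` is a generator set of `R`: it contains the identity, finite compositions of its
elements commute, it acts transitively on `R`, and it is locally invariant. -/
def IsGenSet {n : ℕ} (R : Finset (Fin n → Bool))
    (T : Set ({ψ // ψ ∈ R} → {ψ // ψ ∈ R})) : Prop :=
  id ∈ T ∧
  (∀ P ∈ Gset T, ∀ Q ∈ Gset T, P ∘ Q = Q ∘ P) ∧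
  (∀ ψ φ : {ψ // ψ ∈ R}, ∃ P ∈ Gset T, P ψ = φ) ∧
  (∀ P ∈ T, ∀ A : Finset (Fin n), A.Nonempty →
    (∃ ψ : {ψ // ψ ∈ R}, restrict (↑(P ψ)) A = restrict (↑ψ) A) →
    ∀ φ : {ψ // ψ ∈ R}, restrict (↑(P φ)) A = restrict (↑φ) A)

/-- The operator set `O_A` of a subsystem `A` (for `A = ∅` this is all of `G(𝕋)`). -/
def opSet {n : ℕ} (R : Finset (Fin n → Bool))
    (T : Set ({ψ // ψ ∈ R} → {ψ // ψ ∈ R})) (A : Finset (Fin n)) :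
    Set ({ψ // ψ ∈ R} → {ψ // ψ ∈ R}) :=
  {P | P ∈ Gset T ∧ ∀ ψ : {ψ // ψ ∈ R}, restrict (↑(P ψ)) A = restrict (↑ψ) A}

private lemma bool_ne (a b : Bool) (h : a ≠ b) : a = !b := by
  cases a <;> cases b <;> simp_all

/-- A single generator acts pointwise: agreement at coordinate `i` is preserved. -/
private lemma gen_pt {n : ℕ} {R : Finset (Fin n → Bool)}
    {T : Set ({ψ // ψ ∈ R} → {ψ // ψ ∈ R})} (hT : IsGenSet R T)
    {f : {ψ // ψ ∈ R} → {ψ // ψ ∈ R}} (hf : f ∈ T) (i : Fin n)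
    (ψ χ : {ψ // ψ ∈ R}) (h : (↑ψ : Fin n → Bool) i = (↑χ : Fin n → Bool) i) :
    (↑(f ψ) : Fin n → Bool) i = (↑(f χ) : Fin n → Bool) i := by
  have key : ∀ (a b : Fin n → Bool), restrict a {i} = restrict b {i} ↔ a i = b i := by
    intro a b
    constructor
    · intro hr
      exact congrFun hr ⟨i, Finset.mem_singleton_self i⟩
    · intro hr
      funext x
      have hx : x.1 = i := Finset.mem_singleton.mp x.2
      simp [_root_.restrict, hx, hr]
  by_cases hc : ∃ ρ : {ψ // ψ ∈ R}, (↑(f ρ) : Fin n → Bool) i = (↑ρ : Fin n → Bool) i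
  · obtain ⟨ρ, hρ⟩ := hc
    have hall := hT.2.2.2 f hf {i} (Finset.singleton_nonempty i)
      ⟨ρ, (key _ _).mpr hρ⟩
    have h1 := (key _ _).mp (hall ψ)
    have h2 := (key _ _).mp (hall χ)
    rw [h1, h2, h]
  · push_neg at hc
    have h1 := bool_ne _ _ (hc ψ)
    have h2 := bool_ne _ _ (hc χ)
    rw [h1, h2, h]

/-- Every element of `G(𝕋)` preserves agreement at a coordinate. -/
private lemma G_pt {n : ℕ} {R : Finset (Fin n → Bool)}
    {T : Set ({ψ // ψ ∈ R} → {ψ // ψ ∈ R})} (hT : IsGenSet R T)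
    {P : {ψ // ψ ∈ R} → {ψ // ψ ∈ R}} (hP : P ∈ Gset T) (i : Fin n)
    (ψ χ : {ψ // ψ ∈ R}) (h : (↑ψ : Fin n → Bool) i = (↑χ : Fin n → Bool) i) :
    (↑(P ψ) : Fin n → Bool) i = (↑(P χ) : Fin n → Bool) i := by
  obtain ⟨l, hl, rfl⟩ := hP
  induction l with
  | nil => exact h
  | cons f l ih =>
      have ihl := ih (fun g hg => hl g (List.mem_cons_of_mem _ hg))
      exact gen_pt hT (hl f (List.mem_cons_self (a := f) (l := l))) i _ _ ihl

/-- Local invariance at a coordinate lifts from generators to `G(𝕋)`. -/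
private lemma G_locinv {n : ℕ} {R : Finset (Fin n → Bool)}
    {T : Set ({ψ // ψ ∈ R} → {ψ // ψ ∈ R})} (hT : IsGenSet R T)
    {P : {ψ // ψ ∈ R} → {ψ // ψ ∈ R}} (hP : P ∈ Gset T) (i : Fin n)
    (ψ : {ψ // ψ ∈ R}) (h : (↑(P ψ) : Fin n → Bool) i = (↑ψ : Fin n → Bool) i)
    (χ : {ψ // ψ ∈ R}) :
    (↑(P χ) : Fin n → Bool) i = (↑χ : Fin n → Bool) i := by
  obtain ⟨S, hS, hSψ⟩ := hT.2.2.1 ψ χ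
  have hcomm : P χ = S (P ψ) := by
    rw [← hSψ]
    exact congrFun (hT.2.1 P hP S hS) ψ
  rw [hcomm, ← hSψ]
  exact G_pt hT hS i (P ψ) ψ h

/-- if the generator set consists of self-inverse operators and is
pointwise-disjoint, then every equivalence class of `∼_A` has cardinality `|O_A|`. -/
theorem class_card_eq_opSet_card {n : ℕ} (R : Finset (Fin n → Bool)) (hR : R.Nonempty)
    (T : Set ({ψ // ψ ∈ R} → {ψ // ψ ∈ R})) (hT : IsGenSet R T)
    (hself : ∀ P ∈ T, P ∘ P = id)
    (hdisj : ∀ P ∈ Gset T, ∀ Q ∈ Gset T, (∃ ψ : {ψ // ψ ∈ R}, P ψ = Q ψ) → P = Q)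
    (A : Finset (Fin n)) (hA : A.Nonempty) (ψ : {ψ // ψ ∈ R}) :
    Nat.card {φ : {ψ // ψ ∈ R} | restrict (↑φ) A = restrict (↑ψ) A} =
      Nat.card (opSet R T A) := by
  classical
  set X : Set {ψ // ψ ∈ R} := {φ : {ψ // ψ ∈ R} | restrict (↑φ) A = restrict (↑ψ) A}
  have hmem : ∀ P : opSet R T A, P.1 ψ ∈ X := fun P => P.2.2 ψ
  let F : opSet R T A → X := fun P => ⟨P.1 ψ, hmem P⟩
  have hF : Function.Bijective F := by
    constructor
    · intro P Q h
      have h1 : P.1 ψ = Q.1 ψ := congrArg Subtype.val h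
      exact Subtype.ext (hdisj P.1 P.2.1 Q.1 Q.2.1 ⟨ψ, h1⟩)
    · rintro ⟨φ, hφ⟩
      obtain ⟨Q, hQ, hQψ⟩ := hT.2.2.1 ψ φ
      have hfix : (↑(Q ψ) : Fin n → Bool) ∈ {x | ∀ i ∈ A, x i = (↑ψ : Fin n → Bool) i} := by
        intro i hi
        have := congrFun hφ ⟨i, hi⟩
        rw [hQψ]
        exact this
      have hQop : Q ∈ opSet R T A := by
        refine ⟨hQ, fun χ => funext fun a => ?_⟩
        exact G_locinv hT hQ a.1 ψ (hfix a.1 a.2) χ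
      exact ⟨⟨Q, hQop⟩, Subtype.ext hQψ⟩
  exact Nat.card_congr (Equiv.ofBijective F hF).symm
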